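/- Let ∇ be a torsion-free affine connection on ℝⁿ given by smooth Christoffel symbols Γᵏᵢⱼ, and let g_∇ be its Riemannian extension on ℝ²ⁿ. Fix a point (p,ω) ∈ ℝ²ⁿ and a tangent vector X̃ = (α₁,…,αₙ,α₁',…,αₙ') ∈ ℝ²ⁿ, and let X = (α₁,…,αₙ) ∈ ℝⁿ. Then the characteristic polynomial of the Szabó operator S̃(X̃) of the Levi-Civita connection of g_∇ at (p,ω) equals the square of the characteristic polynomial of the affine Szabó operator S^∇(X) of ∇ at p. -/

import Mathlib

open scoped BigOperators

noncomputable section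

variable {ι : Type} [Fintype ι] [DecidableEq ι]

/-- Partial derivative in the `i`-th coordinate direction. -/
def pd (i : ι) (f : (ι → ℝ) → ℝ) : (ι → ℝ) → ℝ :=
  fun p => fderiv ℝ f p (Pi.single i 1)

/-- Curvature components `R^l_{ijk}` of the torsion-free connection with Christoffel
symbols `Γ k i j = Γᵏᵢⱼ`:
`Rˡᵢⱼₖ = ∂ᵢΓˡⱼₖ − ∂ⱼΓˡᵢₖ + Σₘ (Γˡᵢₘ Γᵐⱼₖ − Γˡⱼₘ Γᵐᵢₖ)`. -/
def curv (Γ : ι → ι → ι → (ι → ℝ) → ℝ) (l i j k : ι) : (ι → ℝ) → ℝ :=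
  fun p => pd i (Γ l j k) p - pd j (Γ l i k) p +
    ∑ m, (Γ l i m p * Γ m j k p - Γ l j m p * Γ m i k p)

/-- Components `(∇ₕR)ˡᵢⱼₖ` of the covariant derivative of the curvature. -/
def covR (Γ : ι → ι → ι → (ι → ℝ) → ℝ) (h l i j k : ι) : (ι → ℝ) → ℝ :=
  fun p => pd h (curv Γ l i j k) p +
    ∑ m, (Γ l h m p * curv Γ m i j k p - Γ m h i p * curv Γ l m j k p
      - Γ m h j p * curv Γ l i m k p - Γ m h k p * curv Γ l i j m p)

/-- The Szabó operator `S(X) : Y ↦ (∇_X R)(Y,X)X` at the point `p`, as a matrix: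
`(S(X)Y)ˡ = Σ_{h,i,j,k} Xʰ Yⁱ Xʲ Xᵏ (∇ₕR)ˡᵢⱼₖ`. -/
def szabo (Γ : ι → ι → ι → (ι → ℝ) → ℝ) (p X : ι → ℝ) : Matrix ι ι ℝ :=
  Matrix.of fun l i => ∑ h, ∑ j, ∑ k, X h * X j * X k * covR Γ h l i j k p

/-- Ricci tensor `Ricⱼₖ = Σᵢ Rⁱᵢⱼₖ`. -/
def ricci (Γ : ι → ι → ι → (ι → ℝ) → ℝ) (j k : ι) : (ι → ℝ) → ℝ :=
  fun p => ∑ i, curv Γ i i j k p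

/-- Covariant derivative of the Ricci tensor,
`(∇ᵢRic)ⱼₖ = ∂ᵢRicⱼₖ − Σₘ (Γᵐᵢⱼ Ricₘₖ + Γᵐᵢₖ Ricⱼₘ)`. -/
def covRic (Γ : ι → ι → ι → (ι → ℝ) → ℝ) (i j k : ι) : (ι → ℝ) → ℝ :=
  fun p => pd i (ricci Γ j k) p -
    ∑ m, (Γ m i j p * ricci Γ m k p + Γ m i k p * ricci Γ j m p)

/-- The Ricci tensor is cyclic parallel at `p`. -/
def CyclicParallelAt (Γ : ι → ι → ι → (ι → ℝ) → ℝ) (p : ι → ℝ) : Prop :=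
  ∀ i j k, covRic Γ i j k p + covRic Γ j k i p + covRic Γ k i j p = 0

/-- Christoffel symbols `Γ̃ᶜₐᵦ = ½ Σ_d g̃ᶜᵈ (∂ₐ g̃ᵦ_d + ∂ᵦ g̃ₐ_d − ∂_d g̃ₐᵦ)` of the
Levi-Civita connection of a pseudo-Riemannian metric `g`. -/
def christoffel (g : (ι → ℝ) → Matrix ι ι ℝ) (c a b : ι) : (ι → ℝ) → ℝ :=
  fun p => (1 / 2) * ∑ d, (g p)⁻¹ c d *
    (pd a (fun q => g q b d) p + pd b (fun q => g q a d) p - pd d (fun q => g q a b) p)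

end

/-- The Riemannian extension `g_∇` on `ℝ²ⁿ = (Fin n ⊕ Fin n) → ℝ` of the torsion-free
connection with Christoffel symbols `Γ`: `g_{ij} = −2 Σₖ u_{k'} Γᵏᵢⱼ`, `g_{ij'} = g_{j'i} = δᵢⱼ`,
`g_{i'j'} = 0`, where the base coordinates are indexed by `Sum.inl` and the fiber
coordinates by `Sum.inr`. -/
def gExt {n : ℕ} (Γ : Fin n → Fin n → Fin n → (Fin n → ℝ) → ℝ) :
    ((Fin n ⊕ Fin n) → ℝ) → Matrix (Fin n ⊕ Fin n) (Fin n ⊕ Fin n) ℝ :=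
  fun u => Matrix.of fun a b =>
    match a, b with
    | Sum.inl i, Sum.inl j => -2 * ∑ k, u (Sum.inr k) * Γ k i j (u ∘ Sum.inl)
    | Sum.inl i, Sum.inr j => if i = j then 1 else 0
    | Sum.inr i, Sum.inl j => if i = j then 1 else 0
    | Sum.inr _, Sum.inr _ => 0


/-! ### Auxiliary lemmas about `pd` -/

noncomputable section AuxBase
variable {ι : Type} [Fintype ι] [DecidableEq ι] {f g : (ι → ℝ) → ℝ} {p : ι → ℝ} {i : ι}

lemma pd_add (hf : DifferentiableAt ℝ f p) (hg : DifferentiableAt ℝ g p) :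
    pd i (fun x => f x + g x) p = pd i f p + pd i g p := by
  simp [pd, fderiv_fun_add hf hg]

lemma pd_sub (hf : DifferentiableAt ℝ f p) (hg : DifferentiableAt ℝ g p) :
    pd i (fun x => f x - g x) p = pd i f p - pd i g p := by
  simp [pd, fderiv_fun_sub hf hg]

lemma pd_mul (hf : DifferentiableAt ℝ f p) (hg : DifferentiableAt ℝ g p) :
    pd i (fun x => f x * g x) p = pd i f p * g p + f p * pd i g p := by
  simp [pd, fderiv_fun_mul hf hg]; ring

lemma pd_const (c : ℝ) : pd i (fun _ => c) p = 0 := by simp [pd, fderiv_const]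

lemma pd_zero : pd i (0 : (ι → ℝ) → ℝ) p = 0 := pd_const 0

lemma pd_neg (hf : DifferentiableAt ℝ f p) : pd i (fun x => -f x) p = -pd i f p := by
  simp [pd, fderiv_neg]

lemma pd_const_mul (hf : DifferentiableAt ℝ f p) (c : ℝ) :
    pd i (fun x => c * f x) p = c * pd i f p := by
  simp [pd, fderiv_const_mul hf]

lemma pd_sum {κ : Type*} (s : Finset κ) (F : κ → (ι → ℝ) → ℝ)
    (hF : ∀ k ∈ s, DifferentiableAt ℝ (F k) p) :
    pd i (fun x => ∑ k ∈ s, F k x) p = ∑ k ∈ s, pd i (F k) p := by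
  simp [pd, fderiv_fun_sum hF]

lemma pd_coord (a b : ι) : pd a (fun u : ι → ℝ => u b) p = if b = a then 1 else 0 := by
  have : (fun u : ι → ℝ => u b) = (ContinuousLinearMap.proj b : ((ι → ℝ) →L[ℝ] ℝ)) := rfl
  rw [pd, this, ContinuousLinearMap.fderiv]
  simp [Pi.single_apply]

lemma contDiff_pd (hf : ContDiff ℝ (⊤:ℕ∞) f) (i : ι) : ContDiff ℝ (⊤:ℕ∞) (pd i f) :=
  (hf.fderiv_right (by exact_mod_cast le_top)).clm_apply contDiff_const

omit [DecidableEq ι] in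
lemma contDiff_coord (b : ι) : ContDiff ℝ (⊤:ℕ∞) (fun u : ι → ℝ => u b) :=
  (ContinuousLinearMap.proj b : (ι → ℝ) →L[ℝ] ℝ).contDiff

omit [DecidableEq ι] in
lemma diffAt_coord (b : ι) (u : ι → ℝ) :
    DifferentiableAt ℝ (fun v : ι → ℝ => v b) u :=
  ((contDiff_coord b).differentiable (by simp)).differentiableAt

lemma diffAt_of_contDiff (hf : ContDiff ℝ (⊤:ℕ∞) f) (u : ι → ℝ) :
    DifferentiableAt ℝ f u :=
  (hf.differentiable (by simp)).differentiableAt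

end AuxBase

/-! ### Pullback along `Sum.inl` and fiber-linear functions -/

noncomputable section AuxPull
variable {n : ℕ}

def inlL (n : ℕ) : (((Fin n ⊕ Fin n) → ℝ)) →L[ℝ] (Fin n → ℝ) :=
  ContinuousLinearMap.pi fun i => ContinuousLinearMap.proj (Sum.inl i)

lemma pullb_eq (f : (Fin n → ℝ) → ℝ) :
    (fun u : (Fin n ⊕ Fin n) → ℝ => f (u ∘ Sum.inl)) = f ∘ (inlL n) := rfl

lemma contDiff_pullb {f : (Fin n → ℝ) → ℝ} (hf : ContDiff ℝ (⊤:ℕ∞) f) :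
    ContDiff ℝ (⊤:ℕ∞) (fun u : (Fin n ⊕ Fin n) → ℝ => f (u ∘ Sum.inl)) := by
  rw [pullb_eq]; exact hf.comp (inlL n).contDiff

lemma contDiff_fiberlin {F : Fin n → (Fin n → ℝ) → ℝ} (hF : ∀ s, ContDiff ℝ (⊤:ℕ∞) (F s)) :
    ContDiff ℝ (⊤:ℕ∞) (fun u : (Fin n ⊕ Fin n) → ℝ => ∑ s, u (Sum.inr s) * F s (u ∘ Sum.inl)) :=
  ContDiff.sum (fun s _ => (contDiff_coord (Sum.inr s)).mul (contDiff_pullb (hF s)))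

lemma inlL_single_inl (i : Fin n) : inlL n (Pi.single (Sum.inl i) (1:ℝ)) = Pi.single i 1 := by
  funext j; simp [inlL, Function.comp, Pi.single_apply]

lemma inlL_single_inr (i : Fin n) : inlL n (Pi.single (Sum.inr i) (1:ℝ)) = 0 := by
  funext j; simp [inlL, Function.comp, Pi.single_apply]

lemma diffAt_pullb {f : (Fin n → ℝ) → ℝ} (hf : ContDiff ℝ (⊤:ℕ∞) f)
    (u : (Fin n ⊕ Fin n) → ℝ) :
    DifferentiableAt ℝ (fun v : (Fin n ⊕ Fin n) → ℝ => f (v ∘ Sum.inl)) u :=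
  ((contDiff_pullb hf).differentiable (by simp)).differentiableAt

lemma diffAt_fiberlin {F : Fin n → (Fin n → ℝ) → ℝ} (hF : ∀ s, ContDiff ℝ (⊤:ℕ∞) (F s))
    (u : (Fin n ⊕ Fin n) → ℝ) :
    DifferentiableAt ℝ (fun v : (Fin n ⊕ Fin n) → ℝ =>
      ∑ s, v (Sum.inr s) * F s (v ∘ Sum.inl)) u :=
  ((contDiff_fiberlin hF).differentiable (by simp)).differentiableAt

lemma pd_pullb_inl {f : (Fin n → ℝ) → ℝ} (hf : Differentiable ℝ f)
    (i : Fin n) (u : (Fin n ⊕ Fin n) → ℝ) :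
    pd (Sum.inl i) (fun v => f (v ∘ Sum.inl)) u = pd i f (u ∘ Sum.inl) := by
  rw [pd, pullb_eq, fderiv_comp u (hf _) (inlL n).differentiableAt, (inlL n).fderiv]
  simp only [ContinuousLinearMap.coe_comp', Function.comp_apply]
  rw [show (inlL n) (Pi.single (Sum.inl i) (1:ℝ)) = Pi.single i 1 from inlL_single_inl i]
  rfl

lemma pd_pullb_inr {f : (Fin n → ℝ) → ℝ} (hf : Differentiable ℝ f)
    (i : Fin n) (u : (Fin n ⊕ Fin n) → ℝ) :
    pd (Sum.inr i) (fun v => f (v ∘ Sum.inl)) u = 0 := by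
  rw [pd, pullb_eq, fderiv_comp u (hf _) (inlL n).differentiableAt, (inlL n).fderiv]
  simp only [ContinuousLinearMap.coe_comp', Function.comp_apply]
  rw [show (inlL n) (Pi.single (Sum.inr i) (1:ℝ)) = 0 from inlL_single_inr i]
  simp

lemma pd_fiberlin_inl {F : Fin n → (Fin n → ℝ) → ℝ} (hF : ∀ s, ContDiff ℝ (⊤:ℕ∞) (F s))
    (h : Fin n) (u : (Fin n ⊕ Fin n) → ℝ) :
    pd (Sum.inl h) (fun v => ∑ s, v (Sum.inr s) * F s (v ∘ Sum.inl)) u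
      = ∑ s, u (Sum.inr s) * pd h (F s) (u ∘ Sum.inl) := by
  rw [pd_sum _ _ (fun s _ => ((diffAt_coord _ u).fun_mul (diffAt_pullb (hF s) u)))]
  refine Finset.sum_congr rfl fun s _ => ?_
  rw [pd_mul (diffAt_coord _ u) (diffAt_pullb (hF s) u), pd_coord,
    pd_pullb_inl ((hF s).differentiable (by simp))]
  simp

lemma pd_fiberlin_inr {F : Fin n → (Fin n → ℝ) → ℝ} (hF : ∀ s, ContDiff ℝ (⊤:ℕ∞) (F s))
    (h : Fin n) (u : (Fin n ⊕ Fin n) → ℝ) :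
    pd (Sum.inr h) (fun v => ∑ s, v (Sum.inr s) * F s (v ∘ Sum.inl)) u
      = F h (u ∘ Sum.inl) := by
  rw [pd_sum _ _ (fun s _ => ((diffAt_coord _ u).fun_mul (diffAt_pullb (hF s) u)))]
  have hterm : ∀ s : Fin n, pd (Sum.inr h) (fun v : (Fin n ⊕ Fin n) → ℝ =>
      v (Sum.inr s) * F s (v ∘ Sum.inl)) u = if s = h then F s (u ∘ Sum.inl) else 0 := by
    intro s
    rw [pd_mul (diffAt_coord _ u) (diffAt_pullb (hF s) u), pd_coord,
      pd_pullb_inr ((hF s).differentiable (by simp))]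
    by_cases hs : s = h <;> simp [hs]
  simp [hterm]

end AuxPull

/-! ### The inverse of the Riemannian-extension metric -/

noncomputable section AuxExt
variable {n : ℕ}

def gInv (Γ : Fin n → Fin n → Fin n → (Fin n → ℝ) → ℝ) :
    ((Fin n ⊕ Fin n) → ℝ) → Matrix (Fin n ⊕ Fin n) (Fin n ⊕ Fin n) ℝ :=
  fun u => Matrix.of fun a b =>
    match a, b with
    | Sum.inl _, Sum.inl _ => 0
    | Sum.inl i, Sum.inr j => if i = j then 1 else 0
    | Sum.inr i, Sum.inl j => if i = j then 1 else 0
    | Sum.inr i, Sum.inr j => 2 * ∑ k, u (Sum.inr k) * Γ k i j (u ∘ Sum.inl)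

lemma gExt_mul_gInv (Γ : Fin n → Fin n → Fin n → (Fin n → ℝ) → ℝ)
    (u : (Fin n ⊕ Fin n) → ℝ) : gExt Γ u * gInv Γ u = 1 := by
  ext a b
  rcases a with i | i <;> rcases b with j | j <;>
    simp [Matrix.mul_apply, Fintype.sum_sum_type, gExt, gInv, Matrix.one_apply,
      Finset.sum_ite_eq, Finset.sum_ite_eq', mul_comm]

lemma gExt_inv (Γ : Fin n → Fin n → Fin n → (Fin n → ℝ) → ℝ)
    (u : (Fin n ⊕ Fin n) → ℝ) : (gExt Γ u)⁻¹ = gInv Γ u :=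
  Matrix.inv_eq_right_inv (gExt_mul_gInv Γ u)

/-! ### The Christoffel symbols of the Riemannian extension -/

/-- Coefficient of `u_{s'}` in `Γ̃^{l'}_{ij}`. -/
def CC (Γ : Fin n → Fin n → Fin n → (Fin n → ℝ) → ℝ) (s i j l : Fin n) :
    (Fin n → ℝ) → ℝ :=
  fun p => -pd i (Γ s j l) p - pd j (Γ s i l) p + pd l (Γ s i j) p +
    2 * ∑ m, Γ s l m p * Γ m i j p

lemma contDiff_CC {Γ : Fin n → Fin n → Fin n → (Fin n → ℝ) → ℝ}
    (hsmooth : ∀ k i j, ContDiff ℝ (⊤ : ℕ∞) (Γ k i j)) (s i j l : Fin n) :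
    ContDiff ℝ (⊤:ℕ∞) (CC Γ s i j l) := by
  unfold CC
  exact ((((contDiff_pd (hsmooth s j l) i).neg.sub (contDiff_pd (hsmooth s i l) j)).add
    (contDiff_pd (hsmooth s i j) l)).add
    (contDiff_const.mul (ContDiff.sum fun m _ => (hsmooth s l m).mul (hsmooth m i j))))

/-- Christoffel symbols of the Levi-Civita connection of `gExt Γ`, explicitly. -/
def ΓT (Γ : Fin n → Fin n → Fin n → (Fin n → ℝ) → ℝ) :
    (Fin n ⊕ Fin n) → (Fin n ⊕ Fin n) → (Fin n ⊕ Fin n) →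
      ((Fin n ⊕ Fin n) → ℝ) → ℝ :=
  fun c a b =>
    match c, a, b with
    | Sum.inl l, Sum.inl i, Sum.inl j => fun u => Γ l i j (u ∘ Sum.inl)
    | Sum.inl _, Sum.inl _, Sum.inr _ => 0
    | Sum.inl _, Sum.inr _, _ => 0
    | Sum.inr l, Sum.inl i, Sum.inl j => fun u => ∑ s, u (Sum.inr s) * CC Γ s i j l (u ∘ Sum.inl)
    | Sum.inr l, Sum.inl i, Sum.inr j => fun u => -Γ j i l (u ∘ Sum.inl)
    | Sum.inr l, Sum.inr i, Sum.inl j => fun u => -Γ i j l (u ∘ Sum.inl)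
    | Sum.inr _, Sum.inr _, Sum.inr _ => 0

section christ
variable {Γ : Fin n → Fin n → Fin n → (Fin n → ℝ) → ℝ}
  (hsmooth : ∀ k i j, ContDiff ℝ (⊤ : ℕ∞) (Γ k i j))
include hsmooth

omit hsmooth in
lemma gEntry_ll (i j : Fin n) :
    (fun q : (Fin n ⊕ Fin n) → ℝ => gExt Γ q (Sum.inl i) (Sum.inl j))
      = fun q => -2 * ∑ k, q (Sum.inr k) * Γ k i j (q ∘ Sum.inl) := rfl

lemma pd_g_ll_inl (i j h : Fin n) (u : (Fin n ⊕ Fin n) → ℝ) :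
    pd (Sum.inl h) (fun q => gExt Γ q (Sum.inl i) (Sum.inl j)) u
      = -2 * ∑ k, u (Sum.inr k) * pd h (Γ k i j) (u ∘ Sum.inl) := by
  rw [gEntry_ll (Γ := Γ) i j,
    pd_const_mul (diffAt_fiberlin (fun s => hsmooth s i j) u),
    pd_fiberlin_inl (fun s => hsmooth s i j)]

lemma pd_g_ll_inr (i j h : Fin n) (u : (Fin n ⊕ Fin n) → ℝ) :
    pd (Sum.inr h) (fun q => gExt Γ q (Sum.inl i) (Sum.inl j)) u
      = -2 * Γ h i j (u ∘ Sum.inl) := by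
  rw [gEntry_ll (Γ := Γ) i j,
    pd_const_mul (diffAt_fiberlin (fun s => hsmooth s i j) u),
    pd_fiberlin_inr (fun s => hsmooth s i j)]

omit hsmooth

lemma pd_g_lr (i j : Fin n) (a : Fin n ⊕ Fin n) (u : (Fin n ⊕ Fin n) → ℝ) :
    pd a (fun q => gExt Γ q (Sum.inl i) (Sum.inr j)) u = 0 := by
  rw [show (fun q : (Fin n ⊕ Fin n) → ℝ => gExt Γ q (Sum.inl i) (Sum.inr j))
    = fun _ => (if i = j then (1:ℝ) else 0) from rfl, pd_const]

lemma pd_g_rl (i j : Fin n) (a : Fin n ⊕ Fin n) (u : (Fin n ⊕ Fin n) → ℝ) :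
    pd a (fun q => gExt Γ q (Sum.inr i) (Sum.inl j)) u = 0 := by
  rw [show (fun q : (Fin n ⊕ Fin n) → ℝ => gExt Γ q (Sum.inr i) (Sum.inl j))
    = fun _ => (if i = j then (1:ℝ) else 0) from rfl, pd_const]

lemma pd_g_rr (i j : Fin n) (a : Fin n ⊕ Fin n) (u : (Fin n ⊕ Fin n) → ℝ) :
    pd a (fun q => gExt Γ q (Sum.inr i) (Sum.inr j)) u = 0 := by
  rw [show (fun q : (Fin n ⊕ Fin n) → ℝ => gExt Γ q (Sum.inr i) (Sum.inr j))
    = fun _ => (0:ℝ) from rfl, pd_const]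

include hsmooth in
lemma christoffel_gExt : christoffel (gExt Γ) = ΓT Γ := by
  funext c a b u
  rw [christoffel, gExt_inv, Fintype.sum_sum_type]
  rcases c with l | l <;> rcases a with i | i <;> rcases b with j | j
  · -- inl inl inl
    simp only [pd_g_ll_inl hsmooth, pd_g_ll_inr hsmooth, pd_g_lr, pd_g_rl, pd_g_rr]
    simp [gInv, ΓT, Finset.sum_ite_eq, Finset.sum_ite_eq']
  · -- inl inl inr
    simp only [pd_g_ll_inl hsmooth, pd_g_ll_inr hsmooth, pd_g_lr, pd_g_rl, pd_g_rr]
    simp [gInv, ΓT, Finset.sum_ite_eq, Finset.sum_ite_eq']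
  · -- inl inr inl
    simp only [pd_g_ll_inl hsmooth, pd_g_ll_inr hsmooth, pd_g_lr, pd_g_rl, pd_g_rr]
    simp [gInv, ΓT, Finset.sum_ite_eq, Finset.sum_ite_eq']
  · -- inl inr inr
    simp only [pd_g_ll_inl hsmooth, pd_g_ll_inr hsmooth, pd_g_lr, pd_g_rl, pd_g_rr]
    simp [gInv, ΓT, Finset.sum_ite_eq, Finset.sum_ite_eq']
  · -- inr inl inl : the main case
    simp only [pd_g_ll_inl hsmooth, pd_g_ll_inr hsmooth, pd_g_lr, pd_g_rl, pd_g_rr]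
    simp only [gInv, ΓT, Matrix.of_apply, CC]
    simp only [ite_mul, one_mul, zero_mul, Finset.sum_ite_eq, Finset.mem_univ, if_true]
    simp only [mul_add, add_mul, mul_sub, sub_mul, neg_mul, mul_neg, Finset.mul_sum,
      Finset.sum_mul, Finset.sum_add_distrib, Finset.sum_sub_distrib, Finset.sum_neg_distrib]
    ring_nf
    simp only [one_mul, mul_zero, mul_one, zero_mul, Finset.sum_const_zero, add_zero, zero_add]
    congr 1
    rw [Finset.sum_comm]
  · -- inr inl inr
    simp only [pd_g_ll_inl hsmooth, pd_g_ll_inr hsmooth, pd_g_lr, pd_g_rl, pd_g_rr]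
    simp [gInv, ΓT, Finset.sum_ite_eq, Finset.sum_ite_eq']
  · -- inr inr inl
    simp only [pd_g_ll_inl hsmooth, pd_g_ll_inr hsmooth, pd_g_lr, pd_g_rl, pd_g_rr]
    simp [gInv, ΓT, Finset.sum_ite_eq, Finset.sum_ite_eq']
  · -- inr inr inr
    simp only [pd_g_ll_inl hsmooth, pd_g_ll_inr hsmooth, pd_g_lr, pd_g_rl, pd_g_rr]
    simp [gInv, ΓT, Finset.sum_ite_eq, Finset.sum_ite_eq']

end christ
end AuxExt

/-! ### Smoothness of curvature -/

noncomputable section AuxCurv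

lemma contDiff_curv {ι : Type} [Fintype ι] [DecidableEq ι]
    {Γ : ι → ι → ι → (ι → ℝ) → ℝ} (hsmooth : ∀ k i j, ContDiff ℝ (⊤ : ℕ∞) (Γ k i j))
    (l i j k : ι) : ContDiff ℝ (⊤:ℕ∞) (curv Γ l i j k) :=
  (((contDiff_pd (hsmooth l j k) i).sub (contDiff_pd (hsmooth l i k) j)).add
    (ContDiff.sum fun m _ => ((hsmooth l i m).mul (hsmooth m j k)).sub
      ((hsmooth l j m).mul (hsmooth m i k))))

variable {n : ℕ} {Γ : Fin n → Fin n → Fin n → (Fin n → ℝ) → ℝ}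
  (hsmooth : ∀ k i j, ContDiff ℝ (⊤ : ℕ∞) (Γ k i j))

section curvT
include hsmooth

/-- upper `inl`, all lower `inl`. -/
lemma curvT_llll (l i j k : Fin n) :
    curv (ΓT Γ) (Sum.inl l) (Sum.inl i) (Sum.inl j) (Sum.inl k)
      = fun u => curv Γ l i j k (u ∘ Sum.inl) := by
  funext u
  have hd := fun l i j => (hsmooth l i j).differentiable (by simp)
  simp only [curv, ΓT, Fintype.sum_sum_type]
  rw [pd_pullb_inl (hd l j k), pd_pullb_inl (hd l i k)]
  simp

/-- upper `inl`, some lower `inr`: everything vanishes. -/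
lemma curvT_inl_zero (l : Fin n) (a b c : Fin n ⊕ Fin n)
    (h : a.isRight ∨ b.isRight ∨ c.isRight) :
    curv (ΓT Γ) (Sum.inl l) a b c = 0 := by
  have hd := fun l i j => (hsmooth l i j).differentiable (by simp)
  funext u
  rcases a with i | i <;> rcases b with j | j <;> rcases c with k | k
  all_goals
    try simp [curv, ΓT, Fintype.sum_sum_type, pd_zero, pd_pullb_inr (hd _ _ _),
      pd_pullb_inl (hd _ _ _)]
  all_goals simp at h

end curvT
end AuxCurv

noncomputable section AuxCurv2
variable {n : ℕ} {Γ : Fin n → Fin n → Fin n → (Fin n → ℝ) → ℝ}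
  (hsmooth : ∀ k i j, ContDiff ℝ (⊤ : ℕ∞) (Γ k i j))

include hsmooth

/-- upper `inr`, lower `(inr, inl, inl)`: the dual curvature. -/
lemma curvT_rrll (hsym : ∀ k i j, Γ k i j = Γ k j i) (l i j k : Fin n) :
    curv (ΓT Γ) (Sum.inr l) (Sum.inr i) (Sum.inl j) (Sum.inl k)
      = fun u => curv Γ i l k j (u ∘ Sum.inl) := by
  funext u
  have hd := fun l i j => (hsmooth l i j).differentiable
    (by simp)
  simp only [curv, ΓT, Fintype.sum_sum_type]
  rw [pd_fiberlin_inr (fun s => contDiff_CC hsmooth s j k l),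
    pd_neg (diffAt_pullb (hsmooth i k l) u), pd_pullb_inl (hd i k l)]
  simp only [CC, Pi.zero_apply, mul_zero, zero_mul, neg_mul, mul_neg, neg_neg,
    Finset.sum_const_zero, add_zero, zero_add, sub_zero, zero_sub, sub_neg_eq_add]
  set pt := u ∘ Sum.inl with hpt
  have h0 : ∑ m, Γ i l m pt * Γ m j k pt = ∑ m, Γ i l m pt * Γ m k j pt :=
    Finset.sum_congr rfl fun m _ => by rw [hsym m j k]
  have h1 : (∑ x, -(Γ i x l pt * Γ x j k pt)) = -∑ x, Γ i l x pt * Γ x k j pt := by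
    rw [← Finset.sum_neg_distrib]
    exact Finset.sum_congr rfl fun x _ => by rw [hsym i x l, hsym x j k]
  have h2 : (∑ x, -(Γ x j l pt * Γ i k x pt)) = -∑ x, Γ i k x pt * Γ x l j pt := by
    rw [← Finset.sum_neg_distrib]
    exact Finset.sum_congr rfl fun x _ => by rw [hsym x j l]; ring
  rw [hsym i j k, hsym i j l, h0, h1, h2, Finset.sum_sub_distrib]
  ring

/-- upper `inr`, lower `inr` and another lower `inr`: vanishes. -/
lemma curvT_rr_zero (l i : Fin n) (b c : Fin n ⊕ Fin n)
    (h : b.isRight ∨ c.isRight) :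
    curv (ΓT Γ) (Sum.inr l) (Sum.inr i) b c = 0 := by
  have hd := fun l i j => (hsmooth l i j).differentiable
    (by simp)
  funext u
  have hpdneg : ∀ (a : Fin n) (f : (Fin n → ℝ) → ℝ), ContDiff ℝ (⊤:ℕ∞) f →
      pd (Sum.inr a) (fun v : (Fin n ⊕ Fin n) → ℝ => -f (v ∘ Sum.inl)) u = 0 := by
    intro a f hf
    rw [pd_neg (diffAt_pullb hf u), pd_pullb_inr (hf.differentiable
      (by simp))]
    simp
  rcases b with j | j <;> rcases c with k | k
  all_goals
    try simp [curv, ΓT, Fintype.sum_sum_type, pd_zero, hpdneg _ _ (hsmooth _ _ _)]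
  all_goals simp at h

section zeroCors

lemma cz1 (l i j k : Fin n) : curv (ΓT Γ) (Sum.inl l) (Sum.inr i) (Sum.inl j) (Sum.inl k) = 0 :=
  curvT_inl_zero hsmooth l _ _ _ (by simp)
lemma cz2 (l i j k : Fin n) : curv (ΓT Γ) (Sum.inl l) (Sum.inl i) (Sum.inr j) (Sum.inl k) = 0 :=
  curvT_inl_zero hsmooth l _ _ _ (by simp)
lemma cz3 (l i j k : Fin n) : curv (ΓT Γ) (Sum.inl l) (Sum.inl i) (Sum.inl j) (Sum.inr k) = 0 :=
  curvT_inl_zero hsmooth l _ _ _ (by simp)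
lemma cz4 (l i j k : Fin n) : curv (ΓT Γ) (Sum.inl l) (Sum.inr i) (Sum.inr j) (Sum.inl k) = 0 :=
  curvT_inl_zero hsmooth l _ _ _ (by simp)
lemma cz5 (l i j k : Fin n) : curv (ΓT Γ) (Sum.inl l) (Sum.inr i) (Sum.inl j) (Sum.inr k) = 0 :=
  curvT_inl_zero hsmooth l _ _ _ (by simp)
lemma cz6 (l i j k : Fin n) : curv (ΓT Γ) (Sum.inl l) (Sum.inl i) (Sum.inr j) (Sum.inr k) = 0 :=
  curvT_inl_zero hsmooth l _ _ _ (by simp)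
lemma cz7 (l i j k : Fin n) : curv (ΓT Γ) (Sum.inl l) (Sum.inr i) (Sum.inr j) (Sum.inr k) = 0 :=
  curvT_inl_zero hsmooth l _ _ _ (by simp)
lemma cz8 (l i j k : Fin n) : curv (ΓT Γ) (Sum.inr l) (Sum.inr i) (Sum.inr j) (Sum.inl k) = 0 :=
  curvT_rr_zero hsmooth l i _ _ (by simp)
lemma cz9 (l i j k : Fin n) : curv (ΓT Γ) (Sum.inr l) (Sum.inr i) (Sum.inl j) (Sum.inr k) = 0 :=
  curvT_rr_zero hsmooth l i _ _ (by simp)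
lemma cz10 (l i j k : Fin n) : curv (ΓT Γ) (Sum.inr l) (Sum.inr i) (Sum.inr j) (Sum.inr k) = 0 :=
  curvT_rr_zero hsmooth l i _ _ (by simp)
end zeroCors

end AuxCurv2

noncomputable section AuxCovR
variable {n : ℕ} {Γ : Fin n → Fin n → Fin n → (Fin n → ℝ) → ℝ}
  (hsmooth : ∀ k i j, ContDiff ℝ (⊤ : ℕ∞) (Γ k i j))
include hsmooth

lemma pd_curv_pullb_inl (l i j k h : Fin n) (u : (Fin n ⊕ Fin n) → ℝ) :
    pd (Sum.inl h) (fun v : (Fin n ⊕ Fin n) → ℝ => curv Γ l i j k (v ∘ Sum.inl)) u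
      = pd h (curv Γ l i j k) (u ∘ Sum.inl) :=
  pd_pullb_inl ((contDiff_curv hsmooth l i j k).differentiable
    (by simp)) h u

lemma pd_curv_pullb_inr (l i j k h : Fin n) (u : (Fin n ⊕ Fin n) → ℝ) :
    pd (Sum.inr h) (fun v : (Fin n ⊕ Fin n) → ℝ => curv Γ l i j k (v ∘ Sum.inl)) u
      = 0 :=
  pd_pullb_inr ((contDiff_curv hsmooth l i j k).differentiable
    (by simp)) h u

variable (hsym : ∀ k i j, Γ k i j = Γ k j i)
include hsym

/-- all indices `inl`: the base covariant derivative of curvature. -/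
lemma covRT_lllll (h l i j k : Fin n) (u : (Fin n ⊕ Fin n) → ℝ) :
    covR (ΓT Γ) (Sum.inl h) (Sum.inl l) (Sum.inl i) (Sum.inl j) (Sum.inl k) u
      = covR Γ h l i j k (u ∘ Sum.inl) := by
  simp only [covR, Fintype.sum_sum_type, curvT_llll hsmooth, cz1 hsmooth, cz2 hsmooth, cz3 hsmooth, cz4 hsmooth, cz5 hsmooth, cz6 hsmooth, cz7 hsmooth, cz8 hsmooth, cz9 hsmooth, cz10 hsmooth,
    curvT_rrll hsmooth hsym, pd_curv_pullb_inl hsmooth,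
    pd_curv_pullb_inr hsmooth, ΓT, pd_zero, Pi.zero_apply, mul_zero, zero_mul,
    sub_zero, zero_sub, add_zero, zero_add, Finset.sum_const_zero, neg_zero]

/-- upper index `inl`: vanishes unless all indices are `inl`. -/
lemma covRT_inl_zero (l : Fin n) (h a j k : Fin n ⊕ Fin n)
    (hcond : h.isRight ∨ a.isRight ∨ j.isRight ∨ k.isRight) (u : (Fin n ⊕ Fin n) → ℝ) :
    covR (ΓT Γ) h (Sum.inl l) a j k u = 0 := by
  rcases h with h | h <;> rcases a with a | a <;> rcases j with j | j <;> rcases k with k | k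
  all_goals
    try simp only [covR, Fintype.sum_sum_type, curvT_llll hsmooth, cz1 hsmooth, cz2 hsmooth, cz3 hsmooth, cz4 hsmooth, cz5 hsmooth, cz6 hsmooth, cz7 hsmooth, cz8 hsmooth, cz9 hsmooth, cz10 hsmooth,
      curvT_rrll hsmooth hsym, pd_curv_pullb_inl hsmooth,
      pd_curv_pullb_inr hsmooth, ΓT, pd_zero, Pi.zero_apply, mul_zero, zero_mul,
      sub_zero, zero_sub, add_zero, zero_add, Finset.sum_const_zero, neg_zero,
      Sum.isRight_inl, Sum.isRight_inr, or_true, true_or, or_self, or_false, false_or]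
  all_goals simp at hcond
end AuxCovR

noncomputable section AuxCovR2
variable {n : ℕ} {Γ : Fin n → Fin n → Fin n → (Fin n → ℝ) → ℝ}
  (hsmooth : ∀ k i j, ContDiff ℝ (⊤ : ℕ∞) (Γ k i j))
  (hsym : ∀ k i j, Γ k i j = Γ k j i)
include hsmooth hsym

/-- dual main case. -/
lemma covRT_rr_main (h l i j k : Fin n) (u : (Fin n ⊕ Fin n) → ℝ) :
    covR (ΓT Γ) (Sum.inl h) (Sum.inr l) (Sum.inr i) (Sum.inl j) (Sum.inl k) u
      = covR Γ h i l k j (u ∘ Sum.inl) := by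
  simp only [covR, Fintype.sum_sum_type, curvT_llll hsmooth,
    cz1 hsmooth, cz2 hsmooth, cz3 hsmooth, cz4 hsmooth, cz5 hsmooth, cz6 hsmooth,
    cz7 hsmooth, cz8 hsmooth, cz9 hsmooth, cz10 hsmooth,
    curvT_rrll hsmooth hsym, pd_curv_pullb_inl hsmooth,
    pd_curv_pullb_inr hsmooth, ΓT, pd_zero, Pi.zero_apply, mul_zero, zero_mul,
    sub_zero, zero_sub, add_zero, zero_add, Finset.sum_const_zero, neg_zero,
    neg_mul, mul_neg, neg_neg]
  congr 1
  rw [← Finset.sum_add_distrib]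
  exact Finset.sum_congr rfl fun m _ => by ring

/-- dual zero cases. -/
lemma covRT_rr_zero (l i : Fin n) (h j k : Fin n ⊕ Fin n)
    (hcond : h.isRight ∨ j.isRight ∨ k.isRight) (u : (Fin n ⊕ Fin n) → ℝ) :
    covR (ΓT Γ) h (Sum.inr l) (Sum.inr i) j k u = 0 := by
  rcases h with h | h <;> rcases j with j | j <;> rcases k with k | k
  all_goals
    try simp only [covR, Fintype.sum_sum_type, curvT_llll hsmooth,
      cz1 hsmooth, cz2 hsmooth, cz3 hsmooth, cz4 hsmooth, cz5 hsmooth, cz6 hsmooth,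
      cz7 hsmooth, cz8 hsmooth, cz9 hsmooth, cz10 hsmooth,
      curvT_rrll hsmooth hsym, pd_curv_pullb_inl hsmooth,
      pd_curv_pullb_inr hsmooth, ΓT, pd_zero, Pi.zero_apply, mul_zero, zero_mul,
      sub_zero, zero_sub, add_zero, zero_add, Finset.sum_const_zero, neg_zero,
      neg_mul, mul_neg, neg_neg]
  all_goals simp at hcond
end AuxCovR2

/-! ### Characteristic polynomial of the transpose -/

lemma charpoly_transpose_eq {m : Type} [Fintype m] [DecidableEq m]
    {R : Type} [CommRing R] (M : Matrix m m R) : (Matrix.transpose M).charpoly = M.charpoly := by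
  have h : Matrix.charmatrix (Matrix.transpose M) = Matrix.transpose (Matrix.charmatrix M) := by
    ext i j
    by_cases hij : i = j <;>
      simp [Matrix.charmatrix_apply, Matrix.transpose_apply, Matrix.diagonal_apply, hij,
        eq_comm, Ne.symm]
  rw [Matrix.charpoly, Matrix.charpoly, h, Matrix.det_transpose]

/-- for the Riemannian extension `g_∇` of a torsion-free affine connection
`∇` on `ℝⁿ`, at any point `(p,ω) ∈ ℝ²ⁿ` and for any tangent vector `X̃ ∈ ℝ²ⁿ` with
horizontal part `X`, the characteristic polynomial of the Szabó operator `S̃(X̃)` of the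
Levi-Civita connection of `g_∇` is the square of the characteristic polynomial of the
affine Szabó operator `S^∇(X)` at `p`. -/
theorem stmt_8 (n : ℕ) (Γ : Fin n → Fin n → Fin n → (Fin n → ℝ) → ℝ)
    (hsmooth : ∀ k i j, ContDiff ℝ (⊤ : ℕ∞) (Γ k i j))
    (hsym : ∀ k i j, Γ k i j = Γ k j i)
    (u : (Fin n ⊕ Fin n) → ℝ) (Xt : (Fin n ⊕ Fin n) → ℝ) :
    (szabo (christoffel (gExt Γ)) u Xt).charpoly =
      (szabo Γ (u ∘ Sum.inl) (Xt ∘ Sum.inl)).charpoly ^ 2 := by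
  have hd := fun l i j => (hsmooth l i j).differentiable
    (by simp)
  rw [christoffel_gExt hsmooth]
  set S := szabo Γ (u ∘ Sum.inl) (Xt ∘ Sum.inl) with hS
  set E : Matrix (Fin n) (Fin n) ℝ :=
    Matrix.of fun l i => szabo (ΓT Γ) u Xt (Sum.inr l) (Sum.inl i) with hE
  have hblock : szabo (ΓT Γ) u Xt = Matrix.fromBlocks S 0 E (Matrix.transpose S) := by
    ext a b
    rcases a with l | l <;> rcases b with i | i
    · -- upper-left block
      have hz : ∀ (h a j k : Fin n ⊕ Fin n),
          (h.isRight ∨ a.isRight ∨ j.isRight ∨ k.isRight) →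
          covR (ΓT Γ) h (Sum.inl l) a j k u = 0 :=
        fun h a j k hc => covRT_inl_zero hsmooth hsym l h a j k hc u
      have hz1 : ∀ (h j k : Fin n), covR (ΓT Γ) (Sum.inr h) (Sum.inl l) (Sum.inl i)
          (Sum.inl j) (Sum.inl k) u = 0 := fun h j k => hz _ _ _ _ (by simp)
      have hz2 : ∀ (h : Fin n ⊕ Fin n) (j k : Fin n), covR (ΓT Γ) h (Sum.inl l) (Sum.inl i)
          (Sum.inr j) (Sum.inl k) u = 0 := fun h j k => hz _ _ _ _ (by simp)
      have hz3 : ∀ (h j : Fin n ⊕ Fin n) (k : Fin n), covR (ΓT Γ) h (Sum.inl l) (Sum.inl i)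
          j (Sum.inr k) u = 0 := fun h j k => hz _ _ _ _ (by simp)
      simp only [szabo, Matrix.of_apply, Matrix.fromBlocks_apply₁₁, Fintype.sum_sum_type,
        hz1, hz2, hz3, covRT_lllll hsmooth hsym, mul_zero, Finset.sum_const_zero, add_zero,
        Function.comp_apply]
      rfl
    · -- upper-right block
      have hz : ∀ (h j k : Fin n ⊕ Fin n),
          covR (ΓT Γ) h (Sum.inl l) (Sum.inr i) j k u = 0 :=
        fun h j k => covRT_inl_zero hsmooth hsym l h _ j k (by simp) u
      simp only [szabo, Matrix.of_apply, Matrix.fromBlocks_apply₁₂, hz, mul_zero,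
        Finset.sum_const_zero, Matrix.zero_apply]
    · -- lower-left block
      simp only [szabo, Matrix.of_apply, Matrix.fromBlocks_apply₂₁, hE]
    · -- lower-right block
      have hz1 : ∀ (h j k : Fin n), covR (ΓT Γ) (Sum.inr h) (Sum.inr l) (Sum.inr i)
          (Sum.inl j) (Sum.inl k) u = 0 :=
        fun h j k => covRT_rr_zero hsmooth hsym l i _ _ _ (by simp) u
      have hz2 : ∀ (h : Fin n ⊕ Fin n) (j k : Fin n), covR (ΓT Γ) h (Sum.inr l) (Sum.inr i)
          (Sum.inr j) (Sum.inl k) u = 0 :=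
        fun h j k => covRT_rr_zero hsmooth hsym l i _ _ _ (by simp) u
      have hz3 : ∀ (h j : Fin n ⊕ Fin n) (k : Fin n), covR (ΓT Γ) h (Sum.inr l) (Sum.inr i)
          j (Sum.inr k) u = 0 :=
        fun h j k => covRT_rr_zero hsmooth hsym l i _ _ _ (by simp) u
      simp only [szabo, Matrix.of_apply, Matrix.fromBlocks_apply₂₂, Matrix.transpose_apply,
        Fintype.sum_sum_type, hz1, hz2, hz3, covRT_rr_main hsmooth hsym, mul_zero,
        Finset.sum_const_zero, add_zero, Function.comp_apply]
      refine Finset.sum_congr rfl fun h _ => ?_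
      rw [Finset.sum_comm]
      exact Finset.sum_congr rfl fun j _ => Finset.sum_congr rfl fun k _ => by
        simp only [Function.comp_apply]; ring
  rw [hblock, Matrix.charpoly_fromBlocks_zero₁₂, charpoly_transpose_eq, sq]
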